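/- (LQ problem: explicit optimal pair under continuous constraints.) Consider the controlled linear equation X^u(t) = 2 + ∫₀^t (X^u(s) + u(s)) ds with controls u(t) ∈ U = [−3,3] on [0,1], the cost J(u) = ∫₀¹ (X^u(t))² dt + (X^u(1))², and the state constraint X^u(t) ≥ 1 for all t ∈ [0,1]. Then the optimal pair is given by ū(t) = −3, X̄(t) = 3 − e^t for t ∈ [0, ln 2], and ū(t) = −1, X̄(t) = 1 for t ∈ (ln 2, 1]; i.e. this pair is admissible (satisfies the state equation and the constraint) and J(ū) ≤ J(u) for every admissible control u whose trajectory satisfies X^u(t) ≥ 1 on [0,1]. -/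

import Mathlib

open MeasureTheory Set Filter Topology

noncomputable section

/-- An admissible control for the LQ problem: measurable with values in `[-3,3]`. -/
def LQAdmissible (u : ℝ → ℝ) : Prop :=
  Measurable u ∧ ∀ t, u t ∈ Set.Icc (-3 : ℝ) 3

/-- `X` solves the LQ state equation `X t = 2 + ∫₀ᵗ (X s + u s) ds` on `[0,1]`. -/
def LQTrajectory (u X : ℝ → ℝ) : Prop :=
  ContinuousOn X (Set.Icc 0 1) ∧
    ∀ s ∈ Set.Icc (0 : ℝ) 1, X s = 2 + ∫ τ in (0 : ℝ)..s, (X τ + u τ)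

/-- The LQ cost `J(u) = ∫₀¹ (Xᵘ t)² dt + (Xᵘ 1)²`. -/
def LQCost (X : ℝ → ℝ) : ℝ :=
  (∫ t in (0 : ℝ)..1, (X t) ^ 2) + (X 1) ^ 2

/-- The claimed optimal control of the LQ problem under the continuous
state constraint `X ≥ 1`. -/
def LQubar : ℝ → ℝ := fun t => if t ≤ Real.log 2 then (-3 : ℝ) else -1

/-- The claimed optimal trajectory of the LQ problem under the continuous
state constraint `X ≥ 1`. -/
def LQXbar : ℝ → ℝ := fun t => if t ≤ Real.log 2 then 3 - Real.exp t else 1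

lemma ln2_pos : 0 < Real.log 2 := Real.log_pos (by norm_num)
lemma ln2_lt_one : Real.log 2 < 1 :=
  lt_of_lt_of_le Real.log_two_lt_d9 (by norm_num)

lemma LQXbar_cont : Continuous LQXbar := by
  refine Continuous.if_le (by continuity) continuous_const continuous_id
    continuous_const ?_
  intro x hx
  rw [hx, Real.exp_log (by norm_num)]
  norm_num

lemma LQXbar_ge_one : ∀ t ∈ Set.Icc (0 : ℝ) 1, 1 ≤ LQXbar t := by
  intro t ht
  unfold LQXbar
  split_ifs with h
  · have : Real.exp t ≤ 2 := by
      calc Real.exp t ≤ Real.exp (Real.log 2) := Real.exp_le_exp.2 h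
      _ = 2 := Real.exp_log (by norm_num)
    linarith
  · exact le_rfl

set_option maxHeartbeats 1000000 in
/-- Gronwall-type lower bound: any admissible trajectory dominates `3 - exp`. -/
lemma traj_lower {u X : ℝ → ℝ} (hu : LQAdmissible u) (hX : LQTrajectory u X) :
    ∀ t ∈ Set.Icc (0 : ℝ) 1, 3 - Real.exp t ≤ X t := by
  obtain ⟨hXc, hXeq⟩ := hX
  set Y : ℝ → ℝ := fun s => X s + Real.exp s - 3 with hYdef
  have hYc : ContinuousOn Y (Set.Icc 0 1) :=
    (hXc.add Real.continuous_exp.continuousOn).sub continuousOn_const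
  have hYint : IntegrableOn Y (Set.Icc 0 1) := hYc.integrableOn_Icc
  set g : ℝ → ℝ := fun t => ∫ τ in (0:ℝ)..t, Y τ with hgdef
  have huint : IntegrableOn u (Set.Icc 0 1) := by
    refine Integrable.mono' (integrable_const 3) hu.1.aestronglyMeasurable.restrict ?_
    filter_upwards with t
    have h := hu.2 t
    rw [Real.norm_eq_abs, abs_le]
    exact ⟨h.1, h.2⟩
  have hXint : IntegrableOn X (Set.Icc 0 1) := hXc.integrableOn_Icc
  have hsub : ∀ t ∈ Set.Icc (0:ℝ) 1, Set.uIcc (0:ℝ) t ⊆ Set.Icc 0 1 := by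
    intro t ht
    rw [Set.uIcc_of_le ht.1]
    exact Set.Icc_subset_Icc le_rfl ht.2
  have hYii : ∀ t ∈ Set.Icc (0:ℝ) 1, IntervalIntegrable Y volume 0 t := fun t ht =>
    (hYint.mono_set (hsub t ht)).intervalIntegrable
  -- Step 1 : g t ≤ Y t on [0,1]
  have step1 : ∀ t ∈ Set.Icc (0:ℝ) 1, g t ≤ Y t := by
    intro t ht
    have hint2 : IntervalIntegrable (fun τ => X τ + u τ + Real.exp τ) volume 0 t :=
      (((hXint.mono_set (hsub t ht)).intervalIntegrable).add
        ((huint.mono_set (hsub t ht)).intervalIntegrable)).add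
        (Real.continuous_exp.intervalIntegrable 0 t)
    have hmono : g t ≤ ∫ τ in (0:ℝ)..t, (X τ + u τ + Real.exp τ) := by
      refine intervalIntegral.integral_mono_on ht.1 (hYii t ht) hint2 ?_
      intro x _
      have := (hu.2 x).1
      simp only [hYdef]
      linarith
    have hYt : Y t = ∫ τ in (0:ℝ)..t, (X τ + u τ + Real.exp τ) := by
      rw [intervalIntegral.integral_add
        (((hXint.mono_set (hsub t ht)).intervalIntegrable).add
          ((huint.mono_set (hsub t ht)).intervalIntegrable))
        (Real.continuous_exp.intervalIntegrable 0 t),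
        integral_exp]
      have := hXeq t ht
      simp only [hYdef]
      rw [this, Real.exp_zero]
      ring
    linarith [hmono, hYt.ge]
  -- Step 2 : 0 ≤ g t on [0,1]
  have hgc : ContinuousOn g (Set.Icc 0 1) := by
    have := intervalIntegral.continuousOn_primitive_interval
      (f := Y) (a := (0:ℝ)) (b := 1) (μ := volume)
      (by rwa [Set.uIcc_of_le zero_le_one])
    rwa [Set.uIcc_of_le zero_le_one] at this
  set h : ℝ → ℝ := fun t => Real.exp (-t) * g t with hhdef
  have hYopen : ContinuousOn Y (Set.Ioo 0 1) := hYc.mono Set.Ioo_subset_Icc_self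
  have hderiv : ∀ x ∈ Set.Ioo (0:ℝ) 1,
      HasDerivAt h (Real.exp (-x) * (Y x - g x)) x := by
    intro x hx
    have hgx : HasDerivAt g (Y x) x := by
      refine intervalIntegral.integral_hasDerivAt_right
        (hYii x (Set.Ioo_subset_Icc_self hx))
        (hYopen.stronglyMeasurableAtFilter isOpen_Ioo x hx) ?_
      exact hYopen.continuousAt (isOpen_Ioo.mem_nhds hx)
    have hex : HasDerivAt (fun t => Real.exp (-t)) (-Real.exp (-x)) x := by
      simpa using (hasDerivAt_neg x).exp
    have : HasDerivAt (fun t => Real.exp (-t) * g t)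
        (-Real.exp (-x) * g x + Real.exp (-x) * Y x) x := hex.mul hgx
    convert this using 1
    ring
  have hmonoh : MonotoneOn h (Set.Icc 0 1) := by
    refine monotoneOn_of_deriv_nonneg (convex_Icc 0 1) ?_ ?_ ?_
    · exact ((Real.continuous_exp.comp continuous_neg).continuousOn).mul hgc
    · intro x hx
      rw [interior_Icc] at hx
      exact (hderiv x hx).differentiableAt.differentiableWithinAt
    · intro x hx
      rw [interior_Icc] at hx
      rw [(hderiv x hx).deriv]
      have h1 := step1 x (Set.Ioo_subset_Icc_self hx)
      exact mul_nonneg (Real.exp_pos _).le (by linarith)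
  have hg0 : g 0 = 0 := by simp [hgdef]
  have step2 : ∀ t ∈ Set.Icc (0:ℝ) 1, 0 ≤ g t := by
    intro t ht
    have := hmonoh (Set.left_mem_Icc.2 zero_le_one) ht ht.1
    simp only [hhdef, hg0, neg_zero, Real.exp_zero, mul_zero, one_mul] at this
    nlinarith [Real.exp_pos (-t), this]
  intro t ht
  have h1 := step1 t ht
  have h2 := step2 t ht
  simp only [hYdef] at h1
  linarith

/-- The explicit pair `(ū, X̄)` is optimal for the LQ problem under the
continuous state constraint `X(t) ≥ 1` on `[0,1]`. -/
theorem stmt_12 :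
    LQAdmissible LQubar ∧ LQTrajectory LQubar LQXbar ∧
    (∀ t ∈ Set.Icc (0 : ℝ) 1, 1 ≤ LQXbar t) ∧
    ∀ u X : ℝ → ℝ, LQAdmissible u → LQTrajectory u X →
      (∀ t ∈ Set.Icc (0 : ℝ) 1, 1 ≤ X t) →
      LQCost LQXbar ≤ LQCost X := by
  refine ⟨⟨?_, ?_⟩, ⟨LQXbar_cont.continuousOn, ?_⟩, LQXbar_ge_one, ?_⟩
  · -- measurability of ū
    unfold LQubar
    exact Measurable.ite measurableSet_Iic measurable_const measurable_const
  · -- range of ū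
    intro t
    unfold LQubar
    split_ifs <;> constructor <;> norm_num
  · -- state equation for X̄
    intro s hs
    have key : ∀ τ, LQXbar τ + LQubar τ =
        Set.indicator (Set.Iic (Real.log 2)) (fun τ => -Real.exp τ) τ := by
      intro τ
      unfold LQXbar LQubar
      rw [Set.indicator_apply]
      simp only [Set.mem_Iic]
      split_ifs <;> ring
    have hii : ∀ a b : ℝ, IntervalIntegrable
        (fun τ => LQXbar τ + LQubar τ) volume a b := by
      intro a b
      have : IntervalIntegrable
          (Set.indicator (Set.Iic (Real.log 2)) (fun τ => -Real.exp τ)) volume a b := by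
        have base : IntervalIntegrable (fun τ => -Real.exp τ) volume a b :=
          (Real.continuous_exp.neg).intervalIntegrable a b
        rw [intervalIntegrable_iff] at base ⊢
        exact base.indicator measurableSet_Iic
      exact this.congr (fun τ _ => (key τ).symm)
    by_cases hcase : s ≤ Real.log 2
    · have heq : ∫ τ in (0:ℝ)..s, (LQXbar τ + LQubar τ)
          = ∫ τ in (0:ℝ)..s, -Real.exp τ := by
        refine intervalIntegral.integral_congr ?_
        intro τ hτ
        rw [Set.uIcc_of_le hs.1] at hτ
        show LQXbar τ + LQubar τ = -Real.exp τ
        rw [key τ, Set.indicator_of_mem (Set.mem_Iic.2 (hτ.2.trans hcase))]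
      rw [heq, intervalIntegral.integral_neg, integral_exp]
      unfold LQXbar
      rw [if_pos hcase]
      simp [Real.exp_zero]
      ring
    · push_neg at hcase
      have hsplit : ∫ τ in (0:ℝ)..s, (LQXbar τ + LQubar τ)
          = (∫ τ in (0:ℝ)..Real.log 2, (LQXbar τ + LQubar τ))
            + ∫ τ in (Real.log 2)..s, (LQXbar τ + LQubar τ) :=
        (intervalIntegral.integral_add_adjacent_intervals (hii 0 _) (hii _ s)).symm
      have h1 : ∫ τ in (0:ℝ)..Real.log 2, (LQXbar τ + LQubar τ) = -1 := by
        have : ∫ τ in (0:ℝ)..Real.log 2, (LQXbar τ + LQubar τ)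
            = ∫ τ in (0:ℝ)..Real.log 2, -Real.exp τ := by
          refine intervalIntegral.integral_congr ?_
          intro τ hτ
          rw [Set.uIcc_of_le ln2_pos.le] at hτ
          show LQXbar τ + LQubar τ = -Real.exp τ
          rw [key τ, Set.indicator_of_mem (Set.mem_Iic.2 hτ.2)]
        rw [this, intervalIntegral.integral_neg, integral_exp,
          Real.exp_log (by norm_num : (0:ℝ) < 2), Real.exp_zero]
        norm_num
      have h2 : ∫ τ in (Real.log 2)..s, (LQXbar τ + LQubar τ) = 0 := by
        have : ∫ τ in (Real.log 2)..s, (LQXbar τ + LQubar τ)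
            = ∫ τ in (Real.log 2)..s, (0:ℝ) := by
          refine intervalIntegral.integral_congr_ae ?_
          filter_upwards with τ hτ
          rw [Set.uIoc_of_le hcase.le] at hτ
          rw [key τ, Set.indicator_of_notMem]
          simpa using hτ.1
        rw [this, intervalIntegral.integral_zero]
      rw [hsplit, h1, h2]
      unfold LQXbar
      rw [if_neg (not_le.2 hcase)]
      norm_num
  · -- optimality
    intro u X hu hX hcon
    have hXbar_le : ∀ t ∈ Set.Icc (0:ℝ) 1, LQXbar t ≤ X t := by
      intro t ht
      unfold LQXbar
      split_ifs with h
      · exact traj_lower hu hX t ht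
      · exact hcon t ht
    have hsq : ∀ t ∈ Set.Icc (0:ℝ) 1, (LQXbar t) ^ 2 ≤ (X t) ^ 2 := by
      intro t ht
      have h1 := LQXbar_ge_one t ht
      have h2 := hXbar_le t ht
      nlinarith
    unfold LQCost
    have hint1 : IntervalIntegrable (fun t => (LQXbar t)^2) volume 0 1 :=
      ((LQXbar_cont.pow 2)).intervalIntegrable 0 1
    have hint2 : IntervalIntegrable (fun t => (X t)^2) volume 0 1 := by
      have : ContinuousOn (fun t => (X t)^2) (Set.Icc 0 1) := hX.1.pow 2
      exact (this.mono (by rw [Set.uIcc_of_le zero_le_one])).intervalIntegrable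
    have hI : (∫ t in (0:ℝ)..1, (LQXbar t)^2) ≤ ∫ t in (0:ℝ)..1, (X t)^2 :=
      intervalIntegral.integral_mono_on zero_le_one hint1 hint2 hsq
    have hend : (LQXbar 1)^2 ≤ (X 1)^2 :=
      hsq 1 (Set.right_mem_Icc.2 zero_le_one)
    linarith
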